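/- Let G be a group, d ≥ 1 an integer, and let G = G_1 ⊇ G_2 ⊇ ... be the lower central series of G. For every 1 ≤ j ≤ d, every g ∈ G_j, and every face α of {0,1}^d of codimension j, the element g^(α) belongs to the Host-Kra cube group HK^[d](G). -/

import Mathlib

open scoped Classical Pointwise

noncomputable section

/-- A face of the cube {0,1}^d of codimension `j`: obtained by fixing the values of a
set `S` of `j` coordinates. -/
def IsFace {d : ℕ} (α : Set (Fin d → Bool)) (j : ℕ) : Prop :=
  ∃ (S : Finset (Fin d)) (v : Fin d → Bool), S.card = j ∧ α = {ε | ∀ i ∈ S, ε i = v i}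

/-- The element `g^(α)` of `G^{2^d}`: entry `g` on vertices of `α`, identity elsewhere. -/
def faceEl {G : Type*} [Group G] {d : ℕ} (α : Set (Fin d → Bool)) (g : G) :
    (Fin d → Bool) → G :=
  fun ε => if ε ∈ α then g else 1

/-- The Host-Kra cube group of order `d` associated with `G`: the subgroup of `G^{2^d}`
generated by all `g^(α)` with `α` a facet (codimension-1 face). -/
def HK (G : Type*) [Group G] (d : ℕ) : Subgroup ((Fin d → Bool) → G) :=
  Subgroup.closure {x | ∃ (g : G) (α : Set (Fin d → Bool)), IsFace α 1 ∧ x = faceEl α g}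

/-- `faceEl α` as a group homomorphism. -/
def faceHom {G : Type*} [Group G] {d : ℕ} (α : Set (Fin d → Bool)) :
    G →* ((Fin d → Bool) → G) where
  toFun g := faceEl α g
  map_one' := by funext ε; simp [faceEl]
  map_mul' a b := by funext ε; by_cases h : ε ∈ α <;> simp [faceEl, h]

open scoped commutatorElement

lemma faceEl_comm {G : Type*} [Group G] {d : ℕ} (α' β : Set (Fin d → Bool)) (a b : G) :
    faceEl (α' ∩ β) ⁅a, b⁆ = ⁅faceEl α' a, faceEl β b⁆ := by
  funext ε
  simp only [commutatorElement_def, Pi.mul_apply, Pi.inv_apply]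
  by_cases h1 : ε ∈ α' <;> by_cases h2 : ε ∈ β <;>
    simp [faceEl, h1, h2, Set.mem_inter_iff]

/-- for `1 ≤ j ≤ d`, `g` in the `j`-th term `G_j` of the lower central
series (`G_1 = G`, so `G_j = (⊤ : Subgroup G).lowerCentralSeries (j-1)`), and `α` a face of
codimension `j`, the element `g^(α)` lies in `HK^[d](G)`. -/
theorem stmt3 (G : Type*) [Group G] (d : ℕ) (hd : 1 ≤ d) :
    ∀ j : ℕ, 1 ≤ j → j ≤ d → ∀ g ∈ (⊤ : Subgroup G).lowerCentralSeries (j - 1),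
      ∀ α : Set (Fin d → Bool), IsFace α j → faceEl α g ∈ HK G d := by
  intro j hj
  induction j, hj using Nat.le_induction with
  | base =>
    intro _ g _ α hα
    exact Subgroup.subset_closure ⟨g, α, hα, rfl⟩
  | succ j hj IH =>
    intro hjd g hg α hα
    obtain ⟨S, v, hS, rfl⟩ := hα
    have hSpos : 0 < S.card := by omega
    obtain ⟨i, hi⟩ := Finset.card_pos.mp hSpos
    set α' : Set (Fin d → Bool) := {ε | ∀ k ∈ S.erase i, ε k = v k} with hα'
    set β : Set (Fin d → Bool) := {ε | ε i = v i} with hβ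
    have hαeq : {ε : Fin d → Bool | ∀ k ∈ S, ε k = v k} = α' ∩ β := by
      ext ε
      simp only [hα', hβ, Set.mem_setOf_eq, Set.mem_inter_iff]
      constructor
      · exact fun h => ⟨fun k hk => h k (Finset.mem_of_mem_erase hk), h i hi⟩
      · rintro ⟨h1, h2⟩ k hk
        rcases eq_or_ne k i with rfl | hne
        · exact h2
        · exact h1 k (Finset.mem_erase.mpr ⟨hne, hk⟩)
    have hg' : g ∈ (⊤ : Subgroup G).lowerCentralSeries j := by simpa using hg
    have hlcs : (⊤ : Subgroup G).lowerCentralSeries j = ⁅(⊤ : Subgroup G).lowerCentralSeries (j - 1), (⊤ : Subgroup G)⁆ := by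
      conv_lhs => rw [← Nat.sub_add_cancel hj]
      rfl
    rw [hlcs] at hg'
    have hle : ⁅(⊤ : Subgroup G).lowerCentralSeries (j - 1), (⊤ : Subgroup G)⁆ ≤
        (HK G d).comap (faceHom {ε : Fin d → Bool | ∀ k ∈ S, ε k = v k}) := by
      rw [Subgroup.commutator_le]
      intro a ha b _
      have hx : faceEl α' a ∈ HK G d := by
        refine IH (by omega) a ha α' ⟨S.erase i, v, ?_, rfl⟩
        rw [Finset.card_erase_of_mem hi, hS]; omega
      have hy : faceEl β b ∈ HK G d := by
        refine Subgroup.subset_closure ⟨b, β, ⟨{i}, v, Finset.card_singleton i, ?_⟩, rfl⟩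
        ext ε; simp [hβ]
      show faceEl _ ⁅a, b⁆ ∈ HK G d
      rw [hαeq, faceEl_comm]
      rw [commutatorElement_def]
      exact mul_mem (mul_mem (mul_mem hx hy) (inv_mem hx)) (inv_mem hy)
    exact hle hg'
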